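/- Let G be a Ferrers graph and K a field. Then for every nonempty subset W of the vertex set of G, the cut algebra K[G_W] of the induced subgraph G_W is an algebra retract of the cut algebra K[G]. -/

import Mathlib

open scoped Classical

noncomputable section

namespace CutPaper

open MvPolynomial

/-- An edge `e` is cut by the partition `A | Aᶜ` if it has exactly one endpoint in `A`. -/
def IsCutEdge {V : Type} (A : Set V) (e : Sym2 V) : Prop :=
  ∃ u v : V, e = s(u, v) ∧ u ∈ A ∧ v ∉ A

/-- The cut set of `A`: all edges of `G` with exactly one endpoint in `A`. -/
def cutSet {V : Type} (G : SimpleGraph V) (A : Set V) : Set (Sym2 V) :=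
  {e ∈ G.edgeSet | IsCutEdge A e}

lemma isCutEdge_compl {V : Type} (A : Set V) (e : Sym2 V) :
    IsCutEdge Aᶜ e ↔ IsCutEdge A e := by
  constructor <;> rintro ⟨u, v, rfl, hu, hv⟩
  · exact ⟨v, u, Sym2.eq_swap, Set.notMem_compl_iff.mp hv, hu⟩
  · exact ⟨v, u, Sym2.eq_swap, hv, not_not_intro hu⟩

/-- Two subsets determine the same unordered partition `A | Aᶜ` of `V`
iff they are equal or complementary. -/
def partitionSetoid (V : Type) : Setoid (Set V) where
  r A B := B = A ∨ B = Aᶜ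
  iseqv := by
    refine ⟨fun A => Or.inl rfl, @fun A B h => ?_, @fun A B C h1 h2 => ?_⟩
    · rcases h with rfl | rfl
      · exact Or.inl rfl
      · exact Or.inr (compl_compl A).symm
    · rcases h1 with rfl | rfl <;> rcases h2 with rfl | rfl
      · exact Or.inl rfl
      · exact Or.inr rfl
      · exact Or.inr rfl
      · exact Or.inl (compl_compl A)

/-- The unordered partitions `A | Aᶜ` of `V`, indexing the variables of `S_G`. -/
abbrev Partition (V : Type) := Quotient (partitionSetoid V)

variable (K : Type) [CommRing K]

/-- The variable `q_{A|Aᶜ}` of the polynomial ring `S_G`. -/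
def qPart {V : Type} (A : Set V) : MvPolynomial (Partition V) K :=
  X (Quotient.mk (partitionSetoid V) A)

/-- The monomial `u_A = ∏_{e ∈ Cut(A)} s_e · ∏_{e ∈ E \ Cut(A)} t_e`;
the variable `s_e` is `X (true, e)` and `t_e` is `X (false, e)`. -/
def cutMonomial {V : Type} [Finite V] (G : SimpleGraph V) (A : Set V) :
    MvPolynomial (Bool × Sym2 V) K :=
  ∏ e ∈ (Set.toFinite G.edgeSet).toFinset,
    if IsCutEdge A e then X (true, e) else X (false, e)

lemma cutMonomial_compl {V : Type} [Finite V] (G : SimpleGraph V) (A : Set V) :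
    cutMonomial K G Aᶜ = cutMonomial K G A := by
  unfold cutMonomial
  refine Finset.prod_congr rfl fun e _ => ?_
  by_cases h : IsCutEdge A e
  · rw [if_pos ((isCutEdge_compl A e).mpr h), if_pos h]
  · rw [if_neg fun hc => h ((isCutEdge_compl A e).mp hc), if_neg h]

/-- The `K`-algebra homomorphism `φ_G : S_G → R_G`, `q_{A|Aᶜ} ↦ u_A`. -/
def phi {V : Type} [Finite V] (G : SimpleGraph V) :
    MvPolynomial (Partition V) K →ₐ[K] MvPolynomial (Bool × Sym2 V) K :=
  aeval fun p : Partition V =>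
    Quotient.lift (cutMonomial K G)
      (fun A B hAB => by
        have h : B = A ∨ B = Aᶜ := hAB
        rcases h with rfl | rfl
        · rfl
        · exact (cutMonomial_compl K G A).symm) p

/-- The cut ideal `I_G = ker φ_G`. -/
def cutIdeal {V : Type} [Finite V] (G : SimpleGraph V) :
    Ideal (MvPolynomial (Partition V) K) :=
  RingHom.ker (phi K G)

/-- The cut algebra `K[G]`, i.e. the image of `φ_G`: the `K`-subalgebra of `R_G`
generated by the monomials `u_A`. -/
def cutAlgebra {V : Type} [Finite V] (G : SimpleGraph V) :
    Subalgebra K (MvPolynomial (Bool × Sym2 V) K) :=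
  Algebra.adjoin K {m | ∃ A : Set V, m = cutMonomial K G A}

/-- The generator `u_A` of the cut algebra, as an element of the cut algebra. -/
def uGen {V : Type} [Finite V] (G : SimpleGraph V) (A : Set V) : ↥(cutAlgebra K G) :=
  ⟨cutMonomial K G A, Algebra.subset_adjoin ⟨A, rfl⟩⟩

/-- An element of `S_G/I` is homogeneous of degree `d` if it is the class of a homogeneous
polynomial of degree `d`. -/
def QuotHomogeneous {σ : Type} (I : Ideal (MvPolynomial σ K)) (d : ℕ)
    (x : MvPolynomial σ K ⧸ I) : Prop :=
  ∃ f : MvPolynomial σ K, f.IsHomogeneous d ∧ Ideal.Quotient.mk I f = x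

/-- The cut algebra of `H` is an algebra retract of the cut algebra of `G`:
there are homogeneous `K`-algebra homomorphisms `ι : K[H] → K[G]` (injective) and
`π : K[G] → K[H]` with `π ∘ ι = id`. -/
def CutAlgebraRetract {V W : Type} [Finite V] [Finite W]
    (H : SimpleGraph W) (G : SimpleGraph V) : Prop :=
  ∃ (ι : (MvPolynomial (Partition W) K ⧸ cutIdeal K H) →ₐ[K]
      (MvPolynomial (Partition V) K ⧸ cutIdeal K G))
    (π : (MvPolynomial (Partition V) K ⧸ cutIdeal K G) →ₐ[K]
      (MvPolynomial (Partition W) K ⧸ cutIdeal K H)),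
    Function.Injective ι ∧
    (∀ d x, QuotHomogeneous K (cutIdeal K H) d x →
      ∃ d', QuotHomogeneous K (cutIdeal K G) d' (ι x)) ∧
    (∀ d x, QuotHomogeneous K (cutIdeal K G) d x →
      ∃ d', QuotHomogeneous K (cutIdeal K H) d' (π x)) ∧
    π.comp ι = AlgHom.id K _

/-- The graph obtained from `G` by contracting the edge `{u, v}`: the vertex `u` is removed
and merged into `v`. -/
def contractEdge {V : Type} (G : SimpleGraph V) (u v : V) :
    SimpleGraph {x : V // x ≠ u} where
  Adj a b := a ≠ b ∧
    (G.Adj a b ∨ ((a : V) = v ∧ G.Adj u b) ∨ ((b : V) = v ∧ G.Adj a u))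
  symm := ⟨by
    rintro a b ⟨hne, h | ⟨ha, h⟩ | ⟨hb, h⟩⟩
    · exact ⟨hne.symm, Or.inl h.symm⟩
    · exact ⟨hne.symm, Or.inr (Or.inr ⟨ha, h.symm⟩)⟩
    · exact ⟨hne.symm, Or.inr (Or.inl ⟨hb, h.symm⟩)⟩⟩
  loopless := ⟨fun a h => h.1 rfl⟩

/-- The induced subgraph `G_W` is a neighborhood-minor of `G`: `W` and `W' = Wᶜ` are nonempty
and there is a vertex `v ∈ W` with `W ∩ N_G(W') ⊆ N_{G_W}[v]`. -/
def IsNeighborhoodMinor {V : Type} (G : SimpleGraph V) (W : Set V) : Prop :=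
  W.Nonempty ∧ Wᶜ.Nonempty ∧
    ∃ v ∈ W, ∀ x ∈ W, (∃ y ∈ Wᶜ, G.Adj y x) → x = v ∨ G.Adj v x

/-- The cut vector `δ_A ∈ {0,1}^E` of the partition `A | Aᶜ`. -/
def cutVector {V : Type} (G : SimpleGraph V) (A : Set V) : ↥G.edgeSet → ℝ :=
  fun e => if IsCutEdge A (e : Sym2 V) then 1 else 0

/-- The cut polytope `Cut^□(G) ⊆ ℝ^E`: the convex hull of the cut vectors. -/
def cutPolytope {V : Type} (G : SimpleGraph V) : Set (↥G.edgeSet → ℝ) :=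
  convexHull ℝ {x | ∃ A : Set V, x = cutVector G A}

/-- `F` is a face of `P`: either a trivial face (`P` or `∅`), or the intersection of `P`
with a supporting hyperplane. -/
def IsFace {α : Type} (P F : Set (α → ℝ)) : Prop :=
  F = P ∨ F = ∅ ∨
    ∃ (φ : (α → ℝ) →ₗ[ℝ] ℝ) (c : ℝ), φ ≠ 0 ∧
      (∀ x ∈ P, φ x ≤ c) ∧ F = P ∩ {x | φ x = c}

/-- `P` and `Q` are affinely isomorphic: there is a bijective map from `P` onto `Q`
extending to an affine map. -/
def AffinelyIsomorphic {α β : Type} (P : Set (α → ℝ)) (Q : Set (β → ℝ)) : Prop :=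
  ∃ f : (α → ℝ) →ᵃ[ℝ] (β → ℝ), Set.InjOn f P ∧ f '' P = Q

/-- The monomial `z · ∏_{e ∈ Cut(A)} y_e` of the polytopal algebra of the cut polytope;
the variable `z` is `X none` and `y_e` is `X (some e)`. -/
def polytopeMonomial {V : Type} [Finite V] (G : SimpleGraph V) (A : Set V) :
    MvPolynomial (Option (Sym2 V)) K :=
  X none * ∏ e ∈ (Set.toFinite (cutSet G A)).toFinset, X (some e)

/-- The polytopal algebra `K[Cut^□(G)]`: the subalgebra of `K[y_e (e ∈ E), z]` generated by
the monomials `z · y^{δ_A}` attached to the lattice points (= cut vectors) of `Cut^□(G)`. -/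
def polytopalAlgebra {V : Type} [Finite V] (G : SimpleGraph V) :
    Subalgebra K (MvPolynomial (Option (Sym2 V)) K) :=
  Algebra.adjoin K {m | ∃ A : Set V, m = polytopeMonomial K G A}

/-- `G'` is a combinatorial retract of `G`: it is obtained from `G` by a finite sequence of
edge contractions and neighborhood-minors. -/
inductive CombinatorialRetract : ∀ {V W : Type}, SimpleGraph V → SimpleGraph W → Prop
  | refl {V : Type} (G : SimpleGraph V) : CombinatorialRetract G G
  | contract {V W : Type} (G : SimpleGraph V) (u v : V) (huv : G.Adj u v)
      (G' : SimpleGraph W) (h : CombinatorialRetract (contractEdge G u v) G') :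
      CombinatorialRetract G G'
  | nbhdMinor {V W : Type} (G : SimpleGraph V) (S : Set V)
      (hS : IsNeighborhoodMinor G S) (G' : SimpleGraph W)
      (h : CombinatorialRetract (SimpleGraph.induce S G) G') :
      CombinatorialRetract G G'

/-! ### Auxiliary machinery for the retract construction -/

lemma isCutEdge_pair {V : Type} (A : Set V) (a b : V) :
    IsCutEdge A s(a, b) ↔ ((a ∈ A ∧ b ∉ A) ∨ (b ∈ A ∧ a ∉ A)) := by
  constructor
  · rintro ⟨u, v, huv, hu, hv⟩
    rw [Sym2.eq_iff] at huv
    rcases huv with ⟨rfl, rfl⟩ | ⟨rfl, rfl⟩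
    · exact Or.inl ⟨hu, hv⟩
    · exact Or.inr ⟨hu, hv⟩
  · rintro (⟨h1, h2⟩ | ⟨h1, h2⟩)
    · exact ⟨a, b, rfl, h1, h2⟩
    · exact ⟨b, a, Sym2.eq_swap, h1, h2⟩

lemma isCutEdge_preimage {V V' : Type} (r : V → V') (A : Set V') (a b : V) :
    IsCutEdge (r ⁻¹' A) s(a, b) ↔ IsCutEdge A s(r a, r b) := by
  simp [isCutEdge_pair, Set.mem_preimage]

/-- The map on unordered partitions induced by taking preimages along `r`. -/
def partMap {V V' : Type} (r : V → V') : Partition V' → Partition V :=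
  Quotient.lift (fun A => Quotient.mk (partitionSetoid V) (r ⁻¹' A))
    (fun A B hAB => by
      rcases (hAB : B = A ∨ B = Aᶜ) with rfl | rfl
      · rfl
      · exact Quotient.sound (Or.inr (Set.preimage_compl)))

@[simp] lemma partMap_mk {V V' : Type} (r : V → V') (A : Set V') :
    partMap r (Quotient.mk (partitionSetoid V') A) =
      Quotient.mk (partitionSetoid V) (r ⁻¹' A) := rfl

@[simp] lemma phi_X {V : Type} [Finite V] (G : SimpleGraph V) (A : Set V) :
    phi K G (X (Quotient.mk (partitionSetoid V) A)) = cutMonomial K G A := by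
  simp [phi]

lemma aeval_cut_prod {α β : Type} [DecidableEq β] (F : Finset α) (Fb : Finset β)
    (g : α → β) (hg : ∀ a ∈ F, g a ∈ Fb) (c : β → Prop) :
    aeval (fun p : Bool × β => ∏ a ∈ F.filter (fun a => g a = p.2),
        (X (p.1, a) : MvPolynomial (Bool × α) K))
      (∏ y ∈ Fb, if c y then (X (true, y) : MvPolynomial (Bool × β) K) else X (false, y)) =
    ∏ a ∈ F, if c (g a) then (X (true, a) : MvPolynomial (Bool × α) K) else X (false, a) := by
  rw [map_prod, ← Finset.prod_fiberwise_of_maps_to hg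
      (fun a => if c (g a) then (X (true, a) : MvPolynomial (Bool × α) K) else X (false, a))]
  refine Finset.prod_congr rfl fun y _ => ?_
  by_cases hc : c y
  · rw [if_pos hc, aeval_X]
    exact Finset.prod_congr rfl fun a ha => by
      rw [if_pos (by rw [(Finset.mem_filter.mp ha).2]; exact hc)]
  · rw [if_neg hc, aeval_X]
    exact Finset.prod_congr rfl fun a ha => by
      rw [if_neg (by rw [(Finset.mem_filter.mp ha).2]; exact hc)]

lemma aeval_cutMonomial_comp {V V' : Type} [Finite V] [Finite V']
    (G : SimpleGraph V) (G' : SimpleGraph V') (r : V → V')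
    (hr : ∀ e ∈ G.edgeSet, Sym2.map r e ∈ G'.edgeSet) (A : Set V') :
    aeval (fun p : Bool × Sym2 V' =>
        ∏ e ∈ (Set.toFinite G.edgeSet).toFinset.filter (fun e => Sym2.map r e = p.2),
          (X (p.1, e) : MvPolynomial (Bool × Sym2 V) K))
      (cutMonomial K G' A) = cutMonomial K G (r ⁻¹' A) := by
  unfold cutMonomial
  refine (aeval_cut_prod K ((Set.toFinite G.edgeSet).toFinset)
      ((Set.toFinite G'.edgeSet).toFinset) (Sym2.map r)
      (fun e he => (Set.Finite.mem_toFinset _).mpr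
        (hr e ((Set.Finite.mem_toFinset _).mp he))) (IsCutEdge A)).trans ?_
  refine Finset.prod_congr rfl fun e _ => ?_
  refine Sym2.ind (fun a b => ?_) e
  exact if_congr (by rw [Sym2.map_pair_eq]; exact (isCutEdge_preimage r A a b).symm) rfl rfl

lemma phi_comp_rename {V V' : Type} [Finite V] [Finite V']
    (G : SimpleGraph V) (G' : SimpleGraph V') (r : V → V')
    (hr : ∀ e ∈ G.edgeSet, Sym2.map r e ∈ G'.edgeSet) :
    (phi K G).comp (rename (partMap r)) =
      (aeval (fun p : Bool × Sym2 V' =>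
        ∏ e ∈ (Set.toFinite G.edgeSet).toFinset.filter (fun e => Sym2.map r e = p.2),
          (X (p.1, e) : MvPolynomial (Bool × Sym2 V) K))).comp (phi K G') := by
  apply MvPolynomial.algHom_ext
  intro p
  induction p using Quotient.ind with | _ A => ?_
  simp only [AlgHom.comp_apply, rename_X, partMap_mk, phi_X]
  exact (aeval_cutMonomial_comp K G G' r hr A).symm

lemma rename_partMap_mem {V V' : Type} [Finite V] [Finite V']
    (G : SimpleGraph V) (G' : SimpleGraph V') (r : V → V')
    (hr : ∀ e ∈ G.edgeSet, Sym2.map r e ∈ G'.edgeSet)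
    {f : MvPolynomial (Partition V') K} (hf : f ∈ cutIdeal K G') :
    rename (partMap r) f ∈ cutIdeal K G := by
  have h := AlgHom.congr_fun (phi_comp_rename K G G' r hr) f
  simp only [AlgHom.comp_apply] at h
  simp only [cutIdeal, RingHom.mem_ker] at hf ⊢
  rw [h, hf, map_zero]

lemma cutMonomial_congr {V : Type} [Finite V] (G : SimpleGraph V) {A B : Set V}
    (h : ∀ e ∈ G.edgeSet, (IsCutEdge A e ↔ IsCutEdge B e)) :
    cutMonomial K G A = cutMonomial K G B := by
  unfold cutMonomial
  exact Finset.prod_congr rfl fun e he =>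
    if_congr (h e ((Set.Finite.mem_toFinset _).mp he)) rfl rfl

lemma retract_of_copyMap {V : Type} [Finite V]
    (G : SimpleGraph V) (W : Set V) (r : V → ↥W)
    (hmap : ∀ a b : V, G.Adj a b → G.Adj ↑(r a) ↑(r b))
    (hrW : ∀ a b : ↥W, G.Adj ↑a ↑b → r ↑a = a) :
    CutAlgebraRetract K (SimpleGraph.induce W G) G := by
  have hind : ∀ a b : ↥W, (SimpleGraph.induce W G).Adj a b ↔ G.Adj ↑a ↑b := by
    intro a b; simp [SimpleGraph.comap_adj]
  have hr1 : ∀ e ∈ G.edgeSet, Sym2.map r e ∈ (SimpleGraph.induce W G).edgeSet := by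
    intro e
    refine Sym2.ind (fun a b hab => ?_) e
    rw [SimpleGraph.mem_edgeSet] at hab
    rw [Sym2.map_pair_eq, SimpleGraph.mem_edgeSet]
    exact (hind _ _).mpr (hmap a b hab)
  have hr2 : ∀ e ∈ (SimpleGraph.induce W G).edgeSet,
      Sym2.map (Subtype.val : ↥W → V) e ∈ G.edgeSet := by
    intro e
    refine Sym2.ind (fun a b hab => ?_) e
    rw [SimpleGraph.mem_edgeSet] at hab
    rw [Sym2.map_pair_eq, SimpleGraph.mem_edgeSet]
    exact (hind _ _).mp hab
  set H := SimpleGraph.induce W G with hH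
  have hker1 : ∀ f ∈ cutIdeal K H, rename (partMap r) f ∈ cutIdeal K G :=
    fun f hf => rename_partMap_mem K G H r hr1 hf
  have hker2 : ∀ f ∈ cutIdeal K G,
      rename (partMap (Subtype.val : ↥W → V)) f ∈ cutIdeal K H :=
    fun f hf => rename_partMap_mem K H G Subtype.val hr2 hf
  let ι : (MvPolynomial (Partition ↥W) K ⧸ cutIdeal K H) →ₐ[K]
      (MvPolynomial (Partition V) K ⧸ cutIdeal K G) :=
    Ideal.Quotient.liftₐ (cutIdeal K H)
      ((Ideal.Quotient.mkₐ K (cutIdeal K G)).comp (rename (partMap r)))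
      (fun f hf => by
        simp only [AlgHom.comp_apply, Ideal.Quotient.mkₐ_eq_mk]
        exact Ideal.Quotient.eq_zero_iff_mem.mpr (hker1 f hf))
  let π : (MvPolynomial (Partition V) K ⧸ cutIdeal K G) →ₐ[K]
      (MvPolynomial (Partition ↥W) K ⧸ cutIdeal K H) :=
    Ideal.Quotient.liftₐ (cutIdeal K G)
      ((Ideal.Quotient.mkₐ K (cutIdeal K H)).comp (rename (partMap (Subtype.val : ↥W → V))))
      (fun f hf => by
        simp only [AlgHom.comp_apply, Ideal.Quotient.mkₐ_eq_mk]
        exact Ideal.Quotient.eq_zero_iff_mem.mpr (hker2 f hf))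
  have hι : ∀ f, ι (Ideal.Quotient.mk (cutIdeal K H) f) =
      Ideal.Quotient.mk (cutIdeal K G) (rename (partMap r) f) := fun f => by
    simp [ι, Ideal.Quotient.liftₐ_apply]
    exact Ideal.Quotient.lift_mk _ _ _
  have hπ : ∀ f, π (Ideal.Quotient.mk (cutIdeal K G) f) =
      Ideal.Quotient.mk (cutIdeal K H) (rename (partMap (Subtype.val : ↥W → V)) f) := fun f => by
    simp [π, Ideal.Quotient.liftₐ_apply]
    exact Ideal.Quotient.lift_mk _ _ _
  have hcomp : π.comp ι = AlgHom.id K _ := by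
    apply Ideal.Quotient.algHom_ext
    apply MvPolynomial.algHom_ext
    intro p
    induction p using Quotient.ind with | _ A => ?_
    simp only [AlgHom.comp_apply, Ideal.Quotient.mkₐ_eq_mk, AlgHom.id_apply]
    rw [hι, rename_X, partMap_mk, hπ, rename_X, partMap_mk, Ideal.Quotient.eq]
    simp only [cutIdeal, RingHom.mem_ker, map_sub, phi_X, sub_eq_zero]
    refine cutMonomial_congr K H ?_
    intro e
    refine Sym2.ind (fun a b hab => ?_) e
    have hG : G.Adj ↑a ↑b := (hind a b).mp ((SimpleGraph.mem_edgeSet _).mp hab)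
    rw [isCutEdge_preimage, isCutEdge_preimage, hrW a b hG, hrW b a hG.symm]
  have hli : Function.LeftInverse π ι := fun x => by
    rw [← AlgHom.comp_apply, hcomp, AlgHom.id_apply]
  refine ⟨ι, π, hli.injective, ?_, ?_, hcomp⟩
  · rintro d x ⟨f, hf, rfl⟩
    exact ⟨d, rename (partMap r) f, hf.rename_isHomogeneous, (hι f).symm⟩
  · rintro d x ⟨f, hf, rfl⟩
    exact ⟨d, rename (partMap (Subtype.val : ↥W → V)) f, hf.rename_isHomogeneous, (hπ f).symm⟩

lemma retract_of_edgeless {V : Type} [Finite V]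
    (G : SimpleGraph V) (W : Set V)
    (hemp : (SimpleGraph.induce W G).edgeSet = ∅) :
    CutAlgebraRetract K (SimpleGraph.induce W G) G := by
  set H := SimpleGraph.induce W G with hH
  have hr2 : ∀ e ∈ H.edgeSet, Sym2.map (Subtype.val : ↥W → V) e ∈ G.edgeSet := by
    intro e he; rw [hemp] at he; exact absurd he (Set.notMem_empty e)
  have hcm : ∀ A : Set ↥W, cutMonomial K H A = 1 := by
    intro A
    unfold cutMonomial
    rw [Set.Finite.toFinset_eq_empty.mpr hemp, Finset.prod_empty]
  have hker2 : ∀ f ∈ cutIdeal K G,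
      rename (partMap (Subtype.val : ↥W → V)) f ∈ cutIdeal K H :=
    fun f hf => rename_partMap_mem K H G Subtype.val hr2 hf
  -- the evaluation of everything at 1
  let ev : MvPolynomial (Partition ↥W) K →ₐ[K] K := aeval (fun _ : Partition ↥W => (1 : K))
  let ψ : MvPolynomial (Partition ↥W) K →ₐ[K] MvPolynomial (Partition V) K :=
    (Algebra.ofId K (MvPolynomial (Partition V) K)).comp ev
  have hψ : ∀ f, ψ f = C (ev f) := fun f => by
    simp only [ψ, AlgHom.comp_apply, Algebra.ofId_apply, MvPolynomial.algebraMap_eq]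
  have hphi_eq : (phi K H) = (Algebra.ofId K _).comp ev := by
    apply MvPolynomial.algHom_ext
    intro p
    induction p using Quotient.ind with | _ A => ?_
    rw [phi_X, hcm A]
    simp [ev, Algebra.ofId_apply]
  have hev0 : ∀ f ∈ cutIdeal K H, ev f = 0 := by
    intro f hf
    simp only [cutIdeal, RingHom.mem_ker, hphi_eq] at hf
    simp only [AlgHom.comp_apply, Algebra.ofId_apply, MvPolynomial.algebraMap_eq] at hf
    have hC : (C (ev f) : MvPolynomial (Bool × Sym2 ↥W) K) = C 0 := by
      rw [map_zero]; exact hf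
    exact MvPolynomial.C_injective _ K hC
  let ι : (MvPolynomial (Partition ↥W) K ⧸ cutIdeal K H) →ₐ[K]
      (MvPolynomial (Partition V) K ⧸ cutIdeal K G) :=
    Ideal.Quotient.liftₐ (cutIdeal K H)
      ((Ideal.Quotient.mkₐ K (cutIdeal K G)).comp ψ)
      (fun f hf => by
        simp only [AlgHom.comp_apply, Ideal.Quotient.mkₐ_eq_mk, hψ f, hev0 f hf, map_zero])
  let π : (MvPolynomial (Partition V) K ⧸ cutIdeal K G) →ₐ[K]
      (MvPolynomial (Partition ↥W) K ⧸ cutIdeal K H) :=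
    Ideal.Quotient.liftₐ (cutIdeal K G)
      ((Ideal.Quotient.mkₐ K (cutIdeal K H)).comp (rename (partMap (Subtype.val : ↥W → V))))
      (fun f hf => by
        simp only [AlgHom.comp_apply, Ideal.Quotient.mkₐ_eq_mk]
        exact Ideal.Quotient.eq_zero_iff_mem.mpr (hker2 f hf))
  have hι : ∀ f, ι (Ideal.Quotient.mk (cutIdeal K H) f) =
      Ideal.Quotient.mk (cutIdeal K G) (ψ f) := fun f => by
    simp [ι, Ideal.Quotient.liftₐ_apply]
    exact Ideal.Quotient.lift_mk _ _ _
  have hπ : ∀ f, π (Ideal.Quotient.mk (cutIdeal K G) f) =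
      Ideal.Quotient.mk (cutIdeal K H) (rename (partMap (Subtype.val : ↥W → V)) f) := fun f => by
    simp [π, Ideal.Quotient.liftₐ_apply]
    exact Ideal.Quotient.lift_mk _ _ _
  have hcomp : π.comp ι = AlgHom.id K _ := by
    apply Ideal.Quotient.algHom_ext
    apply MvPolynomial.algHom_ext
    intro p
    induction p using Quotient.ind with | _ A => ?_
    simp only [AlgHom.comp_apply, Ideal.Quotient.mkₐ_eq_mk, AlgHom.id_apply]
    have hev1 : ev (X (Quotient.mk (partitionSetoid ↥W) A)) = 1 := by
      simp [ev]
    rw [hι, hψ, hev1, hπ, Ideal.Quotient.eq]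
    simp only [C_1, map_one]
    simp only [cutIdeal, RingHom.mem_ker, map_sub, map_one, phi_X, hcm, sub_self]
  have hli : Function.LeftInverse π ι := fun x => by
    rw [← AlgHom.comp_apply, hcomp, AlgHom.id_apply]
  refine ⟨ι, π, hli.injective, ?_, ?_, hcomp⟩
  · rintro d x ⟨f, hf, rfl⟩
    exact ⟨0, C (ev f), isHomogeneous_C _ _, by rw [hι, hψ]⟩
  · rintro d x ⟨f, hf, rfl⟩
    exact ⟨d, rename (partMap (Subtype.val : ↥W → V)) f, hf.rename_isHomogeneous, (hπ f).symm⟩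

/-- The folding map for a Ferrers graph: vertices that are in `W` and have a `W`-neighbour
on the other side are kept; all other vertices are sent to the minimal `W`-vertex on
their own side. -/
def ferrersCopy {n m : ℕ} (G : SimpleGraph (Fin (n + 1) ⊕ Fin (m + 1)))
    (W : Set (Fin (n + 1) ⊕ Fin (m + 1)))
    (istar : Fin (n + 1)) (jstar : Fin (m + 1))
    (hi : Sum.inl istar ∈ W) (hj : Sum.inr jstar ∈ W) :
    (Fin (n + 1) ⊕ Fin (m + 1)) → ↥W
  | Sum.inl i =>
      if h : Sum.inl i ∈ W ∧ ∃ q, Sum.inr q ∈ W ∧ G.Adj (Sum.inl i) (Sum.inr q)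
      then ⟨Sum.inl i, h.1⟩ else ⟨Sum.inl istar, hi⟩
  | Sum.inr j =>
      if h : Sum.inr j ∈ W ∧ ∃ p, Sum.inl p ∈ W ∧ G.Adj (Sum.inl p) (Sum.inr j)
      then ⟨Sum.inr j, h.1⟩ else ⟨Sum.inr jstar, hj⟩

theorem stmt15 {n m : ℕ} (K : Type) [Field K]
    (G : SimpleGraph (Fin (n + 1) ⊕ Fin (m + 1)))
    (hX : ∀ i j : Fin (n + 1), ¬ G.Adj (Sum.inl i) (Sum.inl j))
    (hY : ∀ i j : Fin (m + 1), ¬ G.Adj (Sum.inr i) (Sum.inr j))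
    (hc1 : G.Adj (Sum.inl 0) (Sum.inr (Fin.last m)))
    (hc2 : G.Adj (Sum.inl (Fin.last n)) (Sum.inr 0))
    (hferrers : ∀ (i p : Fin (n + 1)) (j q : Fin (m + 1)),
      G.Adj (Sum.inl i) (Sum.inr j) → p ≤ i → q ≤ j → G.Adj (Sum.inl p) (Sum.inr q))
    (W : Set (Fin (n + 1) ⊕ Fin (m + 1))) (hW : W.Nonempty) :
    CutAlgebraRetract K (SimpleGraph.induce W G) G := by
  classical
  by_cases hE : ∃ a b : ↥W, (SimpleGraph.induce W G).Adj a b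
  · obtain ⟨a, b, hab⟩ := hE
    have hGab : G.Adj ↑a ↑b := hab
    obtain ⟨i0, j0, hiW0, hjW0, hadj0⟩ :
        ∃ i0 j0, Sum.inl i0 ∈ W ∧ Sum.inr j0 ∈ W ∧ G.Adj (Sum.inl i0) (Sum.inr j0) := by
      rcases ha' : (a : Fin (n + 1) ⊕ Fin (m + 1)) with i | j <;>
        rcases hb' : (b : Fin (n + 1) ⊕ Fin (m + 1)) with i' | j' <;>
        rw [ha', hb'] at hGab
      · exact absurd hGab (hX _ _)
      · exact ⟨i, j', ha' ▸ a.2, hb' ▸ b.2, hGab⟩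
      · exact ⟨i', j, hb' ▸ b.2, ha' ▸ a.2, hGab.symm⟩
      · exact absurd hGab (hY _ _)
    obtain ⟨istar, histar, hileast⟩ :=
      Set.exists_min_image {i : Fin (n + 1) | Sum.inl i ∈ W} id (Set.toFinite _) ⟨i0, hiW0⟩
    obtain ⟨jstar, hjstar, hjleast⟩ :=
      Set.exists_min_image {j : Fin (m + 1) | Sum.inr j ∈ W} id (Set.toFinite _) ⟨j0, hjW0⟩
    set r := ferrersCopy G W istar jstar histar hjstar with hr
    have hcore : ∀ (i : Fin (n + 1)) (j : Fin (m + 1)), G.Adj (Sum.inl i) (Sum.inr j) →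
        G.Adj ↑(r (Sum.inl i)) ↑(r (Sum.inr j)) := by
      intro i j hij
      rw [hr]
      simp only [ferrersCopy]
      by_cases h1 : Sum.inl i ∈ W ∧ ∃ q, Sum.inr q ∈ W ∧ G.Adj (Sum.inl i) (Sum.inr q) <;>
        by_cases h2 : Sum.inr j ∈ W ∧ ∃ p, Sum.inl p ∈ W ∧ G.Adj (Sum.inl p) (Sum.inr j)
      · rw [dif_pos h1, dif_pos h2]; exact hij
      · rw [dif_pos h1, dif_neg h2]
        obtain ⟨q, hqW, hq⟩ := h1.2
        exact hferrers i i q jstar hq le_rfl (hjleast q hqW)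
      · rw [dif_neg h1, dif_pos h2]
        obtain ⟨p, hpW, hp⟩ := h2.2
        exact hferrers p istar j j hp (hileast p hpW) le_rfl
      · rw [dif_neg h1, dif_neg h2]
        exact hferrers i0 istar j0 jstar hadj0 (hileast i0 hiW0) (hjleast j0 hjW0)
    have hmap : ∀ u v : Fin (n + 1) ⊕ Fin (m + 1), G.Adj u v → G.Adj ↑(r u) ↑(r v) := by
      intro u v huv
      rcases u with i | j <;> rcases v with i' | j'
      · exact absurd huv (hX _ _)
      · exact hcore i j' huv
      · exact (hcore i' j huv.symm).symm
      · exact absurd huv (hY _ _)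
    have hrW : ∀ a b : ↥W, G.Adj ↑a ↑b → r ↑a = a := by
      intro x y hxy
      rcases hx : (x : Fin (n + 1) ⊕ Fin (m + 1)) with i | j
      · have hxW : Sum.inl i ∈ W := hx ▸ x.2
        have hq : ∃ q, Sum.inr q ∈ W ∧ G.Adj (Sum.inl i) (Sum.inr q) := by
          rcases hy : (y : Fin (n + 1) ⊕ Fin (m + 1)) with i' | j' <;>
            rw [hx, hy] at hxy
          · exact absurd hxy (hX _ _)
          · exact ⟨j', hy ▸ y.2, hxy⟩
        rw [hr]
        simp only [ferrersCopy]
        rw [dif_pos ⟨hxW, hq⟩]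
        exact Subtype.ext hx.symm
      · have hxW : Sum.inr j ∈ W := hx ▸ x.2
        have hp : ∃ p, Sum.inl p ∈ W ∧ G.Adj (Sum.inl p) (Sum.inr j) := by
          rcases hy : (y : Fin (n + 1) ⊕ Fin (m + 1)) with i' | j' <;>
            rw [hx, hy] at hxy
          · exact ⟨i', hy ▸ y.2, hxy.symm⟩
          · exact absurd hxy (hY _ _)
        rw [hr]
        simp only [ferrersCopy]
        rw [dif_pos ⟨hxW, hp⟩]
        exact Subtype.ext hx.symm
    exact retract_of_copyMap K G W r hmap hrW
  · refine retract_of_edgeless K G W ?_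
    rw [Set.eq_empty_iff_forall_notMem]
    intro e
    refine Sym2.ind (fun a b hab => ?_) e
    exact hE ⟨a, b, (SimpleGraph.mem_edgeSet _).mp hab⟩

end CutPaper
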